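/- In the two-variable formal power series ring R[[Z,W]] one has (1 + β·Z) · (1 + (W + β)·Z) · S(Z,W) = 1 − Z·W. (Equivalently: the expansion of (z_2 ⊖ z_1)/(z_2 ⊕ z_1) in the region where z_1 is small and z_2 is large is Σ_{i≥j≥0} g_{i,j} z_1^i z_2^{−j}, upon setting Z = z_1 and W = 1/z_2, where z_2 ⊖ z_1 = (z_2 − z_1)/(1+βz_1) and z_2 ⊕ z_1 = z_2 + z_1 + βz_1z_2.) -/

import Mathlib

open MvPowerSeries Finsupp

theorem stmt6 {R : Type*} [CommRing R] (β : R)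
    (g : ℕ → ℕ → R)
    (hg : ∀ i j, j ≤ i →
      g i j = (-1) ^ i * β ^ (i - j)
        * (2 * (Nat.choose i j : R) + (Nat.choose i (j + 1) : R)
            - if j = 0 then 1 else 0))
    (S : MvPowerSeries (Fin 2) R)
    (hS : ∀ d : Fin 2 →₀ ℕ,
      MvPowerSeries.coeff d S = if d 1 ≤ d 0 then g (d 0) (d 1) else 0) :
    (1 + (MvPowerSeries.C (σ := Fin 2) (R := R) β) * MvPowerSeries.X 0)
      * (1 + (MvPowerSeries.X 1 + (MvPowerSeries.C (σ := Fin 2) (R := R) β)) * MvPowerSeries.X 0)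
      * S
    = 1 - MvPowerSeries.X 0 * MvPowerSeries.X 1 := by
  classical
  set e : ℕ → ℕ → (Fin 2 →₀ ℕ) := fun a b => single 0 a + single 1 b with he
  have h1 : ∀ (a b : ℕ) (c : R),
      MvPowerSeries.C (σ := Fin 2) (R := R) c * MvPowerSeries.X 0 ^ a * MvPowerSeries.X 1 ^ b
        = monomial (e a b) c := by
    intro a b c
    rw [X_pow_eq, X_pow_eq, show MvPowerSeries.C (σ := Fin 2) (R := R) c = monomial (0 : Fin 2 →₀ ℕ) c from rfl,
      monomial_mul_monomial, monomial_mul_monomial]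
    simp [he]
  have hP : (1 + MvPowerSeries.C (σ := Fin 2) (R := R) β * MvPowerSeries.X 0)
      * (1 + (MvPowerSeries.X 1 + MvPowerSeries.C (σ := Fin 2) (R := R) β) * MvPowerSeries.X 0)
      = 1 + monomial (e 1 0) (2*β) + monomial (e 1 1) 1
        + monomial (e 2 0) (β^2) + monomial (e 2 1) β := by
    rw [← h1 1 0 (2*β), ← h1 1 1 1, ← h1 2 0 (β^2), ← h1 2 1 β]
    have hC2 : MvPowerSeries.C (σ := Fin 2) (R := R) (2*β) = 2 * MvPowerSeries.C (σ := Fin 2) (R := R) β := by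
      rw [two_mul, map_add, two_mul]
    have hC1 : MvPowerSeries.C (σ := Fin 2) (R := R) (1:R) = 1 := map_one _
    have hCb2 : MvPowerSeries.C (σ := Fin 2) (R := R) (β^2)
        = MvPowerSeries.C (σ := Fin 2) (R := R) β ^ 2 := by simp [map_pow]
    rw [hC2, hC1, hCb2]
    ring
  have hX01 : (MvPowerSeries.X 0 : MvPowerSeries (Fin 2) R) * MvPowerSeries.X 1
      = monomial (e 1 1) 1 := by
    rw [X_def, X_def, monomial_mul_monomial]; simp [he]
  rw [hP, hX01]
  ext d
  have hle : ∀ a b : ℕ, e a b ≤ d ↔ a ≤ d 0 ∧ b ≤ d 1 := by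
    intro a b
    simp [Finsupp.le_def, Fin.forall_fin_two, he, Finsupp.single_apply]
  have happ0 : ∀ a b : ℕ, (d - e a b) 0 = d 0 - a := by
    intro a b; simp [tsub_apply, he, Finsupp.single_apply]
  have happ1 : ∀ a b : ℕ, (d - e a b) 1 = d 1 - b := by
    intro a b; simp [tsub_apply, he, Finsupp.single_apply]
  have hd0 : d = 0 ↔ d 0 = 0 ∧ d 1 = 0 := by
    simp [DFunLike.ext_iff, Fin.forall_fin_two]
  have hd11 : d = e 1 1 ↔ d 0 = 1 ∧ d 1 = 1 := by
    simp [DFunLike.ext_iff, Fin.forall_fin_two, he, Finsupp.single_apply]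
  simp only [map_add, map_sub, add_mul, one_mul, coeff_monomial_mul, coeff_one,
    coeff_monomial, hS, hle, happ0, happ1, hd0, hd11]
  generalize d 0 = i
  generalize d 1 = j
  clear hle happ0 happ1 hd0 hd11 hP hX01 h1 hS S he
  rcases i with _ | _ | k
  · rcases j with _ | l
    · simp [hg 0 0 le_rfl]; norm_num
    · simp
  · rcases j with _ | _ | l
    · norm_num [hg]; ring
    · norm_num [hg]
    · norm_num
  · rcases j with _ | l
    · norm_num [hg, Nat.choose_one_right]
      push_cast
      ring
    · rcases Nat.lt_trichotomy l k with hlt | rfl | hgt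
      · obtain ⟨m, rfl⟩ := Nat.exists_eq_add_of_lt hlt
        simp (disch := omega) only [if_pos, if_neg, hg]
        rw [show l + m + 1 + 1 + 1 - (l + 1) = m + 2 from by omega,
            show l + 1 - 0 = l + 1 from by omega,
            show l + 1 - 1 = l from by omega,
            show l + m + 1 + 1 + 1 - 1 = l + m + 2 from by omega,
            show l + m + 1 + 1 + 1 - 2 = l + m + 1 from by omega,
            show l + m + 1 + 1 + 1 = l + m + 3 from by omega]
        rw [show l + m + 2 - (l + 1) = m + 1 from by omega,
            show l + m + 2 - l = m + 2 from by omega,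
            show l + m + 1 - (l + 1) = m from by omega,
            show l + m + 1 - l = m + 1 from by omega]
        have A1 : (((l+m+3).choose (l+1) : ℕ) : R)
            = ((l+m+2).choose l : ℕ) + ((l+m+2).choose (l+1) : ℕ) := by
          rw [show l+m+3 = l+m+2+1 from by omega, Nat.choose_succ_succ (l+m+2) l]
          push_cast; ring
        have A2 : (((l+m+3).choose (l+1+1) : ℕ) : R)
            = ((l+m+2).choose (l+1) : ℕ) + ((l+m+2).choose (l+1+1) : ℕ) := by
          rw [show l+m+3 = l+m+2+1 from by omega, Nat.choose_succ_succ (l+m+2) (l+1)]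
          push_cast; ring
        have A3 : (((l+m+2).choose (l+1) : ℕ) : R)
            = ((l+m+1).choose l : ℕ) + ((l+m+1).choose (l+1) : ℕ) := by
          rw [show l+m+2 = l+m+1+1 from by omega, Nat.choose_succ_succ (l+m+1) l]
          push_cast; ring
        have A4 : (((l+m+2).choose (l+1+1) : ℕ) : R)
            = ((l+m+1).choose (l+1) : ℕ) + ((l+m+1).choose (l+1+1) : ℕ) := by
          rw [show l+m+2 = l+m+1+1 from by omega, Nat.choose_succ_succ (l+m+1) (l+1)]
          push_cast; ring
        linear_combination (2 * ((-1:R)^(l+m+3) * β^(m+2))) * A1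
          + ((-1:R)^(l+m+3) * β^(m+2)) * A2
          - (2 * ((-1:R)^(l+m+3) * β^(m+2))) * A3
          - ((-1:R)^(l+m+3) * β^(m+2)) * A4
      · rcases l with _ | m
        · simp (disch := omega) only [if_pos, if_neg, hg]
          norm_num [Nat.choose]
          ring
        · simp (disch := omega) only [if_pos, if_neg, hg]
          rw [show m + 1 + 1 + 1 - (m + 1 + 1) = 1 from by omega,
              show m + 1 + 1 - 0 = m + 1 + 1 from by omega,
              show m + 1 + 1 - 1 = m + 1 from by omega,
              show m + 1 + 1 + 1 - 1 = m + 1 + 1 from by omega,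
              show m + 1 + 1 + 1 - 2 = m + 1 from by omega]
          rw [show m + 1 + 1 - (m + 1 + 1) = 0 from by omega,
              show m + 1 + 1 - (m + 1) = 1 from by omega,
              show m + 1 - (m + 1) = 0 from by omega]
          simp [Nat.choose_succ_self_right, Nat.choose_self, Nat.choose_succ_self]
          push_cast
          ring
      · obtain ⟨m, rfl⟩ := Nat.exists_eq_add_of_lt hgt
        rcases m with _ | m
        · simp (disch := omega) only [if_pos, if_neg, hg]
          rw [show k + 1 + 1 - (k + 0 + 1 + 1) = 0 from by omega,
              show k + 0 + 1 + 1 - 1 = k + 1 from by omega,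
              show k + 0 + 1 + 1 = k + 1 + 1 from by omega]
          rw [show k + 1 - (k + 1) = 0 from by omega]
          simp [Nat.choose_self, Nat.choose_succ_self]
          ring
        · simp (disch := omega) only [if_pos, if_neg, hg]
          ring
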